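/- Let R be a discrete valuation ring with uniformizer π, M a free R-module of rank n, and N a submodule of M containing π^m M such that N/π^m M is a direct summand of M/π^m M. Then there exists an R-basis x_1,...,x_n of M and an integer r such that N is generated by x_1,...,x_r, π^m x_{r+1},...,π^m x_n. -/

import Mathlib

open Pointwise

/-- Auxiliary: if `x` lies in the span of `c i • b i` for a basis `b`, then the `j`-th
coordinate of `x` is divisible by `c j`. -/
lemma coord_dvd_of_mem_span {R M : Type*} [CommRing R] [AddCommGroup M] [Module R M]
    {n : ℕ} (b : Module.Basis (Fin n) R M) (c : Fin n → R) {x : M}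
    (hx : x ∈ Submodule.span R (Set.range fun i => c i • b i)) (j : Fin n) :
    c j ∣ b.repr x j := by
  obtain ⟨g, hg⟩ := (Submodule.mem_span_range_iff_exists_fun R).mp hx
  have hx' : x = ∑ i, (g i * c i) • b i := by
    rw [← hg]; exact Finset.sum_congr rfl fun i _ => by rw [mul_smul]
  rw [hx', b.repr_sum_self]
  exact dvd_mul_left _ _

/-- Over a DVR `R` with uniformizer `π`, if `N` is a submodule of a
free module `M` of rank `n` with `π^m M ⊆ N` such that `N/π^m M` is a direct
summand of `M/π^m M`, then there is an `R`-basis `x_1,…,x_n` of `M` and an `r`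
such that `N` is generated by `x_1,…,x_r, π^m x_{r+1},…,π^m x_n`. -/
theorem stmt1 {R : Type*} [CommRing R] [IsDomain R] [IsDiscreteValuationRing R]
    (π : R) (hπ : Irreducible π) (m : ℕ) (hm : 1 ≤ m)
    {M : Type*} [AddCommGroup M] [Module R M] (n : ℕ) (bM : Module.Basis (Fin n) R M)
    (N : Submodule R M) (hNsub : π ^ m • (⊤ : Submodule R M) ≤ N)
    -- `N/π^m M` is a direct summand of `M/π^m M`
    (hsplit : ∃ P : Submodule R (M ⧸ (π ^ m • (⊤ : Submodule R M))),
      IsCompl (Submodule.map (Submodule.mkQ (π ^ m • (⊤ : Submodule R M))) N) P) :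
    ∃ (b : Module.Basis (Fin n) R M) (r : ℕ), r ≤ n ∧
      N = Submodule.span R
        (Set.range fun i : Fin n => if (i : ℕ) < r then b i else π ^ m • b i) := by
  classical
  set pm : Submodule R M := π ^ m • ⊤ with hpm
  obtain ⟨P, hP⟩ := hsplit
  set Q : Submodule R M := P.comap pm.mkQ with hQdef
  have hπ0 : π ≠ 0 := hπ.ne_zero
  have hπm0 : π ^ m ≠ 0 := pow_ne_zero _ hπ0
  have hmemN : ∀ x : M, π ^ m • x ∈ N := fun x =>
    hNsub (Submodule.smul_mem_pointwise_smul x _ ⊤ Submodule.mem_top)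
  -- no zero smul divisors on M
  haveI : NoZeroSMulDivisors R M := by
    constructor
    intro c x h
    by_cases hc : c = 0
    · exact Or.inl hc
    · right
      have h1 : c • bM.repr x = 0 := by
        rw [← map_smul, h, map_zero]
      have h2 : bM.repr x = 0 := (smul_eq_zero.mp h1).resolve_left hc
      have := congrArg bM.repr.symm h2
      simpa using this
  -- Step 1: get a complement submodule `Q` in `M`
  have hsup : N ⊔ Q = ⊤ := by
    rw [eq_top_iff]
    intro x _
    have hx : pm.mkQ x ∈ N.map pm.mkQ ⊔ P := by
      rw [hP.sup_eq_top]; trivial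
    obtain ⟨y, hy, z, hz, hyz⟩ := Submodule.mem_sup.mp hx
    obtain ⟨w, hw, rfl⟩ := hy
    refine Submodule.mem_sup.mpr ⟨w, hw, x - w, ?_, by abel⟩
    show pm.mkQ (x - w) ∈ P
    have : pm.mkQ (x - w) = z := by
      rw [map_sub, ← hyz]; abel
    rwa [this]
  have hinf : N ⊓ Q = pm := by
    apply le_antisymm
    · rintro x ⟨hxN, hxQ⟩
      have hx : pm.mkQ x ∈ N.map pm.mkQ ⊓ P := ⟨⟨x, hxN, rfl⟩, hxQ⟩
      rw [hP.inf_eq_bot] at hx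
      have : pm.mkQ x = 0 := hx
      rw [Submodule.mkQ_apply, Submodule.Quotient.mk_eq_zero] at this
      exact this
    · refine le_inf hNsub fun x hx => ?_
      show pm.mkQ x ∈ P
      have : pm.mkQ x = 0 := (Submodule.Quotient.mk_eq_zero pm).mpr hx
      rw [this]; exact P.zero_mem
  -- Step 2: Smith normal form
  obtain ⟨d, ⟨b0, bN, f, a, snf⟩⟩ := N.smithNormalForm bM
  have hd : d = n := by
    have hle : d ≤ n := by simpa using Fintype.card_le_of_embedding f
    have hge : n ≤ d := by
      haveI : Module.Finite R N := Module.Finite.of_basis bN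
      have hfr : Module.finrank R N = d := by
        rw [Module.finrank_eq_card_basis bN, Fintype.card_fin]
      set v : Fin n → N := fun i => ⟨π ^ m • bM i, hmemN _⟩ with hv
      have hvind : LinearIndependent R v := by
        have hcomp : LinearIndependent R (N.subtype ∘ v) := by
          have : (N.subtype ∘ v) = fun i => π ^ m • bM i := rfl
          rw [this]
          rw [Fintype.linearIndependent_iff]
          intro g hg j
          have : ∑ i, (g i * π ^ m) • bM i = 0 := by
            rw [← hg]; exact Finset.sum_congr rfl fun i _ => by rw [mul_smul]
          have := Fintype.linearIndependent_iff.mp bM.linearIndependent _ this j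
          rcases mul_eq_zero.mp this with h | h
          · exact h
          · exact absurd h hπm0
        exact hcomp.of_comp N.subtype
      have := hvind.fintype_card_le_finrank
      rwa [Fintype.card_fin, hfr] at this
    omega
  subst d
  have hfbij : Function.Bijective f := Finite.injective_iff_bijective.mp f.injective
  set e : Fin n ≃ Fin n := Equiv.ofBijective f hfbij with he
  set c : Fin n → R := fun j => a (e.symm j) with hc
  -- N as a span
  have hNspan : N = Submodule.span R (Set.range fun j => c j • b0 j) := by
    have h1 : N = Submodule.map N.subtype ⊤ := by
      rw [Submodule.map_top, Submodule.range_subtype]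
    rw [h1, ← bN.span_eq, Submodule.map_span, ← Set.range_comp]
    congr 1
    have h2 : (N.subtype ∘ bN) = fun i => a i • b0 (f i) := funext fun i => snf i
    have h3 : ((fun j => c j • b0 j) ∘ e) = fun i => a i • b0 (f i) := by
      funext i
      simp only [Function.comp_apply, hc, Equiv.symm_apply_apply]
      rfl
    rw [h2, ← h3, Function.Surjective.range_comp e.surjective]
  -- divisibility
  have hdvd : ∀ j, c j ∣ π ^ m := by
    intro j
    have hmem : π ^ m • b0 j ∈ Submodule.span R (Set.range fun i => c i • b0 i) := by
      rw [← hNspan]; exact hmemN _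
    have := coord_dvd_of_mem_span b0 c hmem j
    rwa [map_smul, Finsupp.smul_apply, Module.Basis.repr_self, Finsupp.single_eq_same,
      smul_eq_mul, mul_one] at this
  -- factor out powers and units
  have hfac : ∀ j, ∃ (k : ℕ) (u : Rˣ), k ≤ m ∧ c j = u * π ^ k := by
    intro j
    have hc0 : c j ≠ 0 := by
      intro h
      exact hπm0 (zero_dvd_iff.mp (h ▸ hdvd j))
    obtain ⟨k, u, hu⟩ := IsDiscreteValuationRing.eq_unit_mul_pow_irreducible hc0 hπ
    refine ⟨k, u, ?_, hu⟩
    have hkd : π ^ k ∣ π ^ m := by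
      have := hdvd j
      rw [hu] at this
      exact dvd_trans (dvd_mul_left _ _) this
    exact (pow_dvd_pow_iff hπ0 hπ.not_isUnit).mp hkd
  choose k u hkm hcu using hfac
  set b1 : Module.Basis (Fin n) R M := b0.unitsSMul u with hb1def
  have hb1 : ∀ j, b1 j = (u j : R) • b0 j := fun j => by
    rw [hb1def, Module.Basis.unitsSMul_apply]; rfl
  have hNspan1 : N = Submodule.span R (Set.range fun j => π ^ k j • b1 j) := by
    rw [hNspan]
    congr 1
    apply congrArg
    funext j
    rw [hcu j, mul_comm, mul_smul, ← hb1 j]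
  -- dichotomy: each k j is 0 or m
  have hdich : ∀ j, k j = 0 ∨ k j = m := by
    intro j
    by_contra hcon
    push_neg at hcon
    obtain ⟨hk0, hkm'⟩ := hcon
    have hk1 : 1 ≤ k j := Nat.one_le_iff_ne_zero.mpr hk0
    have hklt : k j < m := lt_of_le_of_ne (hkm j) hkm'
    have hb1mem : b1 j ∈ N ⊔ Q := by rw [hsup]; trivial
    obtain ⟨x, hxN, v, hvQ, hxv⟩ := Submodule.mem_sup.mp hb1mem
    have h1 : π ^ k j • v ∈ N ⊓ Q := by
      constructor
      · have heq : π ^ k j • v = π ^ k j • b1 j - π ^ k j • x := by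
          rw [← hxv, smul_add]; abel
        rw [heq]
        refine sub_mem ?_ (N.smul_mem _ hxN)
        rw [hNspan1]
        exact Submodule.subset_span ⟨j, rfl⟩
      · exact Q.smul_mem _ hvQ
    rw [hinf, hpm] at h1
    have h1' : π ^ k j • v ∈ π ^ m • ((⊤ : Submodule R M) : Set M) := h1
    obtain ⟨z, -, hz⟩ := Set.mem_smul_set.mp h1'
    have hv : v = π ^ (m - k j) • z := by
      apply smul_right_injective M (pow_ne_zero (k j) hπ0)
      show π ^ k j • v = π ^ k j • (π ^ (m - k j) • z)
      rw [smul_smul, ← pow_add, Nat.add_sub_cancel' (le_of_lt hklt), ← hz]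
    have hrepr1 : (b1.repr (b1 j)) j = 1 := by
      rw [Module.Basis.repr_self, Finsupp.single_eq_same]
    have hxcoord : π ∣ b1.repr x j := by
      have hxmem : x ∈ Submodule.span R (Set.range fun i => π ^ k i • b1 i) := by
        rw [← hNspan1]; exact hxN
      have := coord_dvd_of_mem_span b1 (fun i => π ^ k i) hxmem j
      exact dvd_trans (dvd_pow_self π hk0) this
    have hvcoord : π ∣ b1.repr v j := by
      rw [hv, map_smul, Finsupp.smul_apply, smul_eq_mul]
      exact Dvd.dvd.mul_right (dvd_pow_self π (by omega : m - k j ≠ 0)) _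
    have hdvd1 : π ∣ 1 := by
      rw [← hrepr1, ← hxv, map_add, Finsupp.add_apply]
      exact dvd_add hxcoord hvcoord
    exact hπ.not_isUnit (isUnit_of_dvd_one hdvd1)
  -- sort the exponents
  set σ : Equiv.Perm (Fin n) := Tuple.sort k with hσ
  have hmono : Monotone (k ∘ σ) := Tuple.monotone_sort k
  set b2 : Module.Basis (Fin n) R M := b1.reindex σ.symm with hb2def
  have hb2 : ∀ i, b2 i = b1 (σ i) := by
    intro i
    rw [hb2def, Module.Basis.reindex_apply, Equiv.symm_symm]
  set r : ℕ := (Finset.univ.filter fun i : Fin n => k (σ i) = 0).card with hr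
  have hrn : r ≤ n := le_trans (Finset.card_filter_le _ _) (by simp)
  have hiff : ∀ i : Fin n, k (σ i) = 0 ↔ (i : ℕ) < r := by
    intro i
    constructor
    · intro h
      have hsub : Finset.Iic i ⊆ Finset.univ.filter fun i => k (σ i) = 0 := by
        intro j hj
        rw [Finset.mem_Iic] at hj
        rw [Finset.mem_filter]
        exact ⟨Finset.mem_univ _, Nat.le_zero.mp (h ▸ hmono hj)⟩
      have := Finset.card_le_card hsub
      rw [Fin.card_Iic] at this
      omega
    · intro h
      by_contra hne
      have hsub : (Finset.univ.filter fun i => k (σ i) = 0) ⊆ Finset.Iio i := by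
        intro j hj
        rw [Finset.mem_filter] at hj
        rw [Finset.mem_Iio]
        by_contra hji
        have : i ≤ j := not_lt.mp hji
        exact hne (Nat.le_zero.mp (hj.2 ▸ hmono this))
      have := Finset.card_le_card hsub
      rw [Fin.card_Iio] at this
      omega
  refine ⟨b2, r, hrn, ?_⟩
  rw [hNspan1]
  congr 1
  have hfun : (fun i : Fin n => if (i : ℕ) < r then b2 i else π ^ m • b2 i)
      = (fun j => π ^ k j • b1 j) ∘ σ := by
    funext i
    simp only [Function.comp_apply, hb2 i]
    by_cases hir : (i : ℕ) < r
    · rw [if_pos hir, (hiff i).mpr hir, pow_zero, one_smul]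
    · rw [if_neg hir,
        (hdich (σ i)).resolve_left (fun h0 => hir ((hiff i).mp h0))]
  rw [hfun, Function.Surjective.range_comp σ.surjective]
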